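/- Let n be an odd prime and a, b integers such that n divides a + b. Then n^2 divides (a+b)^n - a^n - b^n. -/
import Mathlib
theorem stmt_9 (n : ℕ) (hn : n.Prime) (hodd : Odd n) (a b : ℤ)
    (h : (n : ℤ) ∣ a + b) : (n : ℤ)^2 ∣ (a + b)^n - a^n - b^n := by
  have h1 : (n : ℤ)^2 ∣ a^n - (-b)^n := by
    have := dvd_sub_pow_of_dvd_sub (p := n) (a := a) (b := -b) (by simpa using h) 1
    simpa using this
  have h2 : (n : ℤ)^2 ∣ (a + b)^n := by
    obtain ⟨k, hk⟩ := h
    have hn2 : 2 ≤ n := hn.two_le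
    calc (n : ℤ)^2 ∣ (n : ℤ)^n := pow_dvd_pow _ hn2
      _ ∣ (a + b)^n := by rw [hk]; exact pow_dvd_pow_of_dvd ⟨k, rfl⟩ n
  have h3 : (-b)^n = -b^n := hodd.neg_pow b
  have : (a + b)^n - a^n - b^n = (a + b)^n - (a^n - (-b)^n) := by rw [h3]; ring
  rw [this]
  exact dvd_sub h2 h1
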